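/- Let (C,d) be a nonarchimedean normed chain complex over K, where the absolute value of K is surjective onto the positive reals. Then the boundary depth equals the supremum of the torsion exponents of the homology of the subcomplex of elements of norm less than 1: β(C,d) = sup{τ(x) : x a nonzero torsion class in H(C_{>0})}, where the supremum of the empty set is taken to be 0 and both sides may equal +∞. -/

import Mathlib

open scoped ENNReal

open Classical in
/-- The boundary depth `β(C,d) ∈ [0,∞]` of a norm-nonincreasing differential `d` on a
nonarchimedean normed chain complex `C`: with `val x := -Real.log ‖x‖`, it equals
`sup` over nonzero `x` in the range of `d` of `inf {val x - val y : d y = x}` when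
`d ≠ 0`, and `0` when `d = 0`. -/
noncomputable def boundaryDepth {C : Type*} [NormedAddCommGroup C] (d : C → C) : ℝ≥0∞ :=
  if ∀ x, d x = 0 then 0
  else
    ⨆ x ∈ {x : C | x ≠ 0 ∧ ∃ y, d y = x},
      ⨅ y ∈ {y : C | d y = x}, ENNReal.ofReal (Real.log ‖y‖ - Real.log ‖x‖)

/-- For a nonarchimedean normed chain complex `(C,d)` over a complete
nonarchimedean field `K` whose absolute value is surjective onto the positive reals,
the boundary depth equals the supremum of the torsion exponents of nonzero torsion
classes in `H(C_{>0}) = (ker d ∩ C_{>0}) / d(C_{>0})` (classes are represented by cycles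
`x` with `‖x‖ < 1`; the class of `x` is nonzero iff `x ∉ d(C_{>0})`, it is torsion iff
`a • x ∈ d(C_{>0})` for some nonzero `a` with `‖a‖ ≤ 1`, and its torsion exponent is
`sup {-log ‖a‖ : a ≠ 0, ‖a‖ ≤ 1, a • x ∉ d(C_{>0})}`). The supremum of the empty set
is `0`, and both sides may equal `+∞`. -/
theorem boundaryDepth_eq_iSup_torsion_exponent
    {K : Type*} [NormedField K] [IsUltrametricDist K] [CompleteSpace K]
    (hsurj : ∀ r : ℝ, 0 < r → ∃ a : K, ‖a‖ = r)
    {C : Type*} [NormedAddCommGroup C] [NormedSpace K C] [CompleteSpace C]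
    [IsUltrametricDist C]
    (d : C →L[K] C) (hd2 : ∀ x, d (d x) = 0) (hd1 : ∀ x, ‖d x‖ ≤ ‖x‖) :
    boundaryDepth (fun x => d x) =
      ⨆ x ∈ {x : C | ‖x‖ < 1 ∧ d x = 0 ∧ x ∉ ⇑d '' {y : C | ‖y‖ < 1} ∧
          ∃ a : K, a ≠ 0 ∧ ‖a‖ ≤ 1 ∧ a • x ∈ ⇑d '' {y : C | ‖y‖ < 1}},
        ⨆ a ∈ {a : K | a ≠ 0 ∧ ‖a‖ ≤ 1 ∧ a • x ∉ ⇑d '' {y : C | ‖y‖ < 1}},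
          ENNReal.ofReal (-Real.log ‖a‖) := by
  apply le_antisymm
  · -- β ≤ T
    by_cases hdz : ∀ z : C, (fun x => d x) z = 0
    · rw [boundaryDepth, if_pos hdz]; exact zero_le
    rw [boundaryDepth, if_neg hdz]
    refine iSup₂_le fun x hx => ?_
    obtain ⟨hx0, z, hz⟩ := hx
    have hxpos : (0:ℝ) < ‖x‖ := norm_pos_iff.mpr hx0
    set S : Set ℝ := (fun y => ‖y‖) '' {y : C | d y = x} with hSdef
    have hSne : S.Nonempty := ⟨‖z‖, z, hz, rfl⟩
    have hSbd : BddBelow S := ⟨0, fun r hr => by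
      obtain ⟨y, _, rfl⟩ := hr; exact norm_nonneg y⟩
    set lam := sInf S with hlamdef
    have hlamge : ‖x‖ ≤ lam := le_csInf hSne (fun r hr => by
      obtain ⟨y, hy, rfl⟩ := hr
      calc ‖x‖ = ‖d y‖ := by rw [hy]
        _ ≤ ‖y‖ := hd1 y)
    have hlampos : 0 < lam := lt_of_lt_of_le hxpos hlamge
    have hex : ∀ r : ℝ, lam < r → ∃ y, d y = x ∧ ‖y‖ < r := by
      intro r hr
      obtain ⟨s, hs, hsr⟩ := exists_lt_of_csInf_lt hSne hr
      obtain ⟨y, hy, rfl⟩ := hs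
      exact ⟨y, hy, hsr⟩
    have hnotB : ∀ e : K, e ≠ 0 → 1 ≤ ‖e‖ * lam →
        e • x ∉ ⇑d '' {y : C | ‖y‖ < 1} := by
      rintro e he0 helam ⟨y, hy1, hdy⟩
      simp only [Set.mem_setOf_eq] at hy1
      have hepos : (0:ℝ) < ‖e‖ := norm_pos_iff.mpr he0
      have hy' : d (e⁻¹ • y) = x := by
        rw [map_smul, hdy, smul_smul, inv_mul_cancel₀ he0, one_smul]
      have hle : lam ≤ ‖e⁻¹ • y‖ := csInf_le hSbd ⟨e⁻¹ • y, hy', rfl⟩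
      rw [norm_smul, norm_inv] at hle
      have h1 : ‖e‖⁻¹ ≤ lam := by
        rw [inv_le_iff_one_le_mul₀ hepos]; linarith [mul_comm ‖e‖ lam]
      nlinarith [hle, h1, hy1, inv_pos.mpr hepos]
    have hinB : ∀ e : K, e ≠ 0 → ‖e‖ * lam < 1 →
        e • x ∈ ⇑d '' {y : C | ‖y‖ < 1} := by
      intro e he0 helam
      have hepos : (0:ℝ) < ‖e‖ := norm_pos_iff.mpr he0
      have : lam < ‖e‖⁻¹ := by
        have h2 : lam * ‖e‖ < 1 := by rw [mul_comm]; exact helam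
        calc lam = lam * ‖e‖ * ‖e‖⁻¹ := by field_simp
          _ < 1 * ‖e‖⁻¹ := mul_lt_mul_of_pos_right h2 (inv_pos.mpr hepos)
          _ = ‖e‖⁻¹ := one_mul _
      obtain ⟨y, hy, hylt⟩ := hex _ this
      refine ⟨e • y, ?_, by rw [map_smul, hy]⟩
      simp only [Set.mem_setOf_eq, norm_smul]
      calc ‖e‖ * ‖y‖ < ‖e‖ * ‖e‖⁻¹ := by
            exact mul_lt_mul_of_pos_left hylt hepos
        _ = 1 := mul_inv_cancel₀ (ne_of_gt hepos)
    set L := Real.log lam - Real.log ‖x‖ with hLdef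
    have hL0 : 0 ≤ L := by
      have := Real.log_le_log hxpos hlamge
      linarith
    have hA : (⨅ y ∈ {y : C | d y = x},
        ENNReal.ofReal (Real.log ‖y‖ - Real.log ‖x‖)) ≤ ENNReal.ofReal L := by
      apply ENNReal.le_of_forall_pos_le_add
      intro ε hε _
      have hεpos : (0:ℝ) < ε := hε
      have hlt : lam < lam * Real.exp ε := by
        nlinarith [Real.one_lt_exp_iff.mpr hεpos, hlampos]
      obtain ⟨y, hy, hylt⟩ := hex _ hlt
      have hypos : (0:ℝ) < ‖y‖ := lt_of_lt_of_le hxpos (by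
        calc ‖x‖ = ‖d y‖ := by rw [hy]
          _ ≤ ‖y‖ := hd1 y)
      refine le_trans (iInf₂_le (f := fun (y : C) (_ : y ∈ {y : C | d y = x}) =>
        ENNReal.ofReal (Real.log ‖y‖ - Real.log ‖x‖)) y hy) ?_
      have hlog : Real.log ‖y‖ - Real.log ‖x‖ ≤ L + ε := by
        have := Real.log_lt_log hypos hylt
        rw [Real.log_mul (ne_of_gt hlampos) (ne_of_gt (Real.exp_pos _)),
          Real.log_exp] at this
        simp only [hLdef]; linarith
      calc ENNReal.ofReal (Real.log ‖y‖ - Real.log ‖x‖)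
          ≤ ENNReal.ofReal (L + ε) := ENNReal.ofReal_le_ofReal hlog
        _ = ENNReal.ofReal L + ENNReal.ofReal ε :=
            ENNReal.ofReal_add hL0 (le_of_lt hεpos)
        _ = ENNReal.ofReal L + ε := by rw [ENNReal.ofReal_coe_nnreal]
    refine le_trans hA ?_
    refine ENNReal.le_of_forall_nnreal_lt fun r hr => ?_
    have hrL : (r:ℝ) < L := by
      have := (ENNReal.lt_ofReal_iff_toReal_lt (by simp)).mp hr
      simpa using this
    set c : ℝ := (r:ℝ) with hcdef
    have hc0 : 0 ≤ c := r.coe_nonneg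
    -- construction
    obtain ⟨c₀, hc₀⟩ := hsurj (Real.exp c / lam) (by positivity)
    have hc₀0 : c₀ ≠ 0 := by
      intro h; rw [h, norm_zero] at hc₀
      have : (0:ℝ) < Real.exp c / lam := by positivity
      linarith
    obtain ⟨a, ha⟩ := hsurj (Real.exp (-c)) (Real.exp_pos _)
    have ha0 : a ≠ 0 := by
      intro h; rw [h, norm_zero] at ha; exact absurd ha.symm (ne_of_gt (Real.exp_pos _))
    obtain ⟨b, hb⟩ := hsurj (Real.exp (-c) / 2) (by positivity)
    have hb0 : b ≠ 0 := by
      intro h; rw [h, norm_zero] at hb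
      have : (0:ℝ) < Real.exp (-c) / 2 := by positivity
      linarith
    have hexpcle1 : Real.exp (-c) ≤ 1 := Real.exp_le_one_iff.mpr (by linarith)
    have hexpc : Real.exp c < lam / ‖x‖ := by
      have h1 : Real.exp c < Real.exp L := Real.exp_lt_exp.mpr hrL
      rwa [hLdef, Real.exp_sub, Real.exp_log hlampos, Real.exp_log hxpos] at h1
    have hdx : d x = 0 := by rw [← hz]; exact hd2 z
    have hmem1 : ‖c₀ • x‖ < 1 := by
      rw [norm_smul, hc₀]
      rw [div_mul_eq_mul_div, div_lt_one hlampos]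
      calc Real.exp c * ‖x‖ < (lam / ‖x‖) * ‖x‖ :=
            mul_lt_mul_of_pos_right hexpc hxpos
        _ = lam := by field_simp
    have hmem2 : d (c₀ • x) = 0 := by rw [map_smul, hdx, smul_zero]
    have hmem3 : c₀ • x ∉ ⇑d '' {y : C | ‖y‖ < 1} := by
      apply hnotB c₀ hc₀0
      rw [hc₀, div_mul_cancel₀ _ (ne_of_gt hlampos)]
      exact Real.one_le_exp hc0
    have hble1 : ‖b‖ ≤ 1 := by rw [hb]; linarith
    have hmem4 : (b * c₀) • x ∈ ⇑d '' {y : C | ‖y‖ < 1} := by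
      apply hinB _ (mul_ne_zero hb0 hc₀0)
      rw [norm_mul, hb, hc₀]
      have hee : Real.exp (-c) * Real.exp c = 1 := by
        rw [← Real.exp_add, neg_add_cancel, Real.exp_zero]
      calc Real.exp (-c) / 2 * (Real.exp c / lam) * lam
          = Real.exp (-c) * Real.exp c / 2 := by field_simp
        _ = 1 / 2 := by rw [hee]
        _ < 1 := by norm_num
    have hale1 : ‖a‖ ≤ 1 := by rw [ha]; exact hexpcle1
    have hmem5 : (a * c₀) • x ∉ ⇑d '' {y : C | ‖y‖ < 1} := by
      apply hnotB _ (mul_ne_zero ha0 hc₀0)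
      rw [norm_mul, ha, hc₀]
      have hee : Real.exp (-c) * Real.exp c = 1 := by
        rw [← Real.exp_add, neg_add_cancel, Real.exp_zero]
      calc (1:ℝ) = Real.exp (-c) * Real.exp c := hee.symm
        _ = Real.exp (-c) * (Real.exp c / lam) * lam := by field_simp
        _ ≤ _ := le_refl _
    refine le_trans ?_ (le_iSup₂ (c₀ • x)
      ⟨hmem1, hmem2, hmem3, b, hb0, hble1, by rw [smul_smul]; exact hmem4⟩)
    refine le_trans ?_ (le_iSup₂ a ⟨ha0, hale1, by rw [smul_smul]; exact hmem5⟩)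
    rw [ha, Real.log_exp, neg_neg]
    exact (ENNReal.ofReal_coe_nnreal (p := r)).ge
  · -- T ≤ β
    refine iSup₂_le fun x hx => iSup₂_le fun a ha => ?_
    obtain ⟨hx1, hdx, hxB, b, hb0, hb1, y₀, hy₀, hdy₀⟩ := hx
    obtain ⟨ha0, ha1, haB⟩ := ha
    simp only [Set.mem_setOf_eq] at hy₀
    have hx0 : x ≠ 0 := by
      intro h
      exact hxB ⟨0, by simp, by simp [h]⟩
    have hxpos : (0:ℝ) < ‖x‖ := norm_pos_iff.mpr hx0
    have hbx0 : b • x ≠ 0 := smul_ne_zero hb0 hx0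
    have hdne : ¬ ∀ z : C, (fun x => d x) z = 0 := by
      intro h
      exact hbx0 (hdy₀ ▸ h y₀)
    rw [boundaryDepth, if_neg hdne]
    refine le_trans ?_ (le_iSup₂ (b • x) ⟨hbx0, y₀, hdy₀⟩)
    refine le_iInf₂ fun y hy => ?_
    simp only [Set.mem_setOf_eq] at hy
    apply ENNReal.ofReal_le_ofReal
    have hapos : (0:ℝ) < ‖a‖ := norm_pos_iff.mpr ha0
    have hbpos : (0:ℝ) < ‖b‖ := norm_pos_iff.mpr hb0
    have hykey : d ((a * b⁻¹) • y) = a • x := by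
      rw [map_smul, hy, smul_smul, mul_assoc, inv_mul_cancel₀ hb0, mul_one]
    have hyge : 1 ≤ ‖(a * b⁻¹) • y‖ := by
      by_contra h
      push_neg at h
      exact haB ⟨(a * b⁻¹) • y, h, hykey⟩
    rw [norm_smul, norm_mul, norm_inv] at hyge
    have hypos : (0:ℝ) < ‖y‖ := by
      rcases eq_or_lt_of_le (norm_nonneg y) with h | h
      · exfalso; rw [← h] at hyge; simp at hyge; linarith
      · exact h
    have hlog : 0 ≤ Real.log (‖a‖ * ‖b‖⁻¹ * ‖y‖) := Real.log_nonneg hyge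
    rw [Real.log_mul (by positivity) (ne_of_gt hypos),
      Real.log_mul (ne_of_gt hapos) (by positivity), Real.log_inv] at hlog
    rw [norm_smul, Real.log_mul (ne_of_gt hbpos) (ne_of_gt hxpos)]
    have hxneg : Real.log ‖x‖ < 0 := Real.log_neg hxpos hx1
    linarith
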